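/- Assume P(V = j) > 0 for every j ∈ Fin K, assume misclassification is nondifferential, and assume Y is integrable. Then for every k ∈ Fin K with P(V* = k) > 0, the conditional mean of the response given the misclassified covariate is the corresponding mixture of conditional means given the true covariate: E[Y · 1_{V* = k}] / P(V* = k) = Σ_{j ∈ Fin K} q_{kj} · ( E[Y · 1_{V = j}] / P(V = j) ). -/

import Mathlib

open MeasureTheory

lemma key_lemma {Ω : Type*} [MeasurableSpace Ω]
    (μ : Measure Ω) [IsProbabilityMeasure μ]
    (Y : Ω → ℝ) (hY : Measurable Y) (hYint : Integrable Y μ)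
    (S T : Set Ω) (hS : MeasurableSet S) (hT : MeasurableSet T)
    (h : ∀ A : Set ℝ, MeasurableSet A →
      (μ (Y ⁻¹' A ∩ S)).toReal * (μ T).toReal =
        (μ (Y ⁻¹' A ∩ T)).toReal * (μ S).toReal) :
    (μ T).toReal * ∫ ω in S, Y ω ∂μ = (μ S).toReal * ∫ ω in T, Y ω ∂μ := by
  have hν : (μ T) • (μ.restrict S).map Y = (μ S) • (μ.restrict T).map Y := by
    ext A hA
    have h1 := h A hA
    have e1 : (μ T • (μ.restrict S).map Y) A = μ T * μ (Y ⁻¹' A ∩ S) := by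
      simp [Measure.map_apply hY hA, Measure.restrict_apply (hY hA)]
    have e2 : (μ S • (μ.restrict T).map Y) A = μ S * μ (Y ⁻¹' A ∩ T) := by
      simp [Measure.map_apply hY hA, Measure.restrict_apply (hY hA)]
    rw [e1, e2]
    have f1 : μ (Y ⁻¹' A ∩ S) ≠ ⊤ := measure_ne_top _ _
    have f2 : μ (Y ⁻¹' A ∩ T) ≠ ⊤ := measure_ne_top _ _
    have fS : μ S ≠ ⊤ := measure_ne_top _ _
    have fT : μ T ≠ ⊤ := measure_ne_top _ _
    rw [← ENNReal.toReal_eq_toReal_iff' (by finiteness) (by finiteness)]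
    rw [ENNReal.toReal_mul, ENNReal.toReal_mul]
    linarith [h1]
  have hint : ∫ x, x ∂((μ T) • (μ.restrict S).map Y) =
      ∫ x, x ∂((μ S) • (μ.restrict T).map Y) := by rw [hν]
  have eS : ∫ x, x ∂((μ.restrict S).map Y) = ∫ ω in S, Y ω ∂μ :=
    integral_map hY.aemeasurable aestronglyMeasurable_id
  have eT : ∫ x, x ∂((μ.restrict T).map Y) = ∫ ω in T, Y ω ∂μ :=
    integral_map hY.aemeasurable aestronglyMeasurable_id
  rw [integral_smul_measure, integral_smul_measure, eS, eT] at hint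
  simpa using hint

theorem mixture_of_conditional_means
    {Ω : Type*} [MeasurableSpace Ω]
    (μ : Measure Ω) [IsProbabilityMeasure μ] {K : ℕ}
    (V Vstar : Ω → Fin K) (Y : Ω → ℝ)
    (hV : Measurable V) (hVstar : Measurable Vstar) (hY : Measurable Y)
    (hYint : Integrable Y μ)
    (hpos : ∀ j : Fin K, 0 < (μ {ω | V ω = j}).toReal)
    (hnondiff : ∀ A : Set ℝ, MeasurableSet A → ∀ j k : Fin K,
      (μ (Y ⁻¹' A ∩ {ω | Vstar ω = k} ∩ {ω | V ω = j})).toReal *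
          (μ {ω | V ω = j}).toReal =
        (μ (Y ⁻¹' A ∩ {ω | V ω = j})).toReal *
          (μ ({ω | Vstar ω = k} ∩ {ω | V ω = j})).toReal) :
    ∀ k : Fin K, 0 < (μ {ω | Vstar ω = k}).toReal →
      (∫ ω in {ω | Vstar ω = k}, Y ω ∂μ) / (μ {ω | Vstar ω = k}).toReal =
        ∑ j : Fin K,
          ((μ ({ω | V ω = j} ∩ {ω | Vstar ω = k})).toReal /
              (μ {ω | Vstar ω = k}).toReal) *
            ((∫ ω in {ω | V ω = j}, Y ω ∂μ) / (μ {ω | V ω = j}).toReal) := by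
  intro k hk
  have hVs : ∀ j : Fin K, MeasurableSet {ω | V ω = j} := fun j =>
    hV (measurableSet_singleton j)
  have hVstarS : MeasurableSet {ω | Vstar ω = k} := hVstar (measurableSet_singleton k)
  set S : Fin K → Set Ω := fun j => {ω | Vstar ω = k} ∩ {ω | V ω = j} with hSdef
  have hSmeas : ∀ j, MeasurableSet (S j) := fun j => hVstarS.inter (hVs j)
  -- key: per-j integral identity
  have hkey : ∀ j : Fin K,
      (μ {ω | V ω = j}).toReal * ∫ ω in S j, Y ω ∂μ =
        (μ (S j)).toReal * ∫ ω in {ω | V ω = j}, Y ω ∂μ := by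
    intro j
    apply key_lemma μ Y hY hYint _ _ (hSmeas j) (hVs j)
    intro A hA
    have := hnondiff A hA j k
    rw [Set.inter_assoc] at this
    exact this
  -- decomposition of integral over {Vstar = k}
  have hUnion : {ω | Vstar ω = k} = ⋃ j, S j := by
    ext ω; simp [hSdef]
  have hdisj : Pairwise (Function.onFun Disjoint S) := by
    intro i j hij
    simp only [Function.onFun, Set.disjoint_left, hSdef]
    rintro ω ⟨_, h1⟩ ⟨_, h2⟩
    exact hij (h1 ▸ h2.symm ▸ rfl)
  have hdecomp : ∫ ω in {ω | Vstar ω = k}, Y ω ∂μ = ∑ j, ∫ ω in S j, Y ω ∂μ := by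
    rw [hUnion, integral_iUnion hSmeas hdisj hYint.integrableOn]
    exact tsum_fintype _
  rw [hdecomp, Finset.sum_div]
  apply Finset.sum_congr rfl
  intro j _
  have hpj := hpos j
  have hSj : ({ω | V ω = j} ∩ {ω | Vstar ω = k}) = S j := Set.inter_comm _ _
  rw [hSj]
  have h := hkey j
  have hP := hk
  field_simp
  linear_combination h
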